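/- Main theorem (rank-1 multiplicative approximation): Let 0 < ε < 1 and let S be a sample of s rows of an n × d real matrix A, each chosen independently with length-squared distribution (row i chosen with probability ‖A^(i)‖^2/‖A‖_F^2). If s = Ω(1/ε^4) (e.g., s ≥ C/ε^4 for a suitable absolute constant C), then there is a random rank-1 matrix Ã whose rows lie in the span of S such that E[‖A − Ã‖_F^2] ≤ (1+ε)·‖A − π_1(A)‖_F^2. -/

import Mathlib

open Finset
namespace Stmt17Aux

lemma sum_pi_prod {s n : ℕ} (h : Fin s → Fin n → ℝ) :
    ∑ f : Fin s → Fin n, ∏ j, h j (f j) = ∏ j, ∑ i, h j i := by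
  have := Finset.prod_univ_sum (fun _ : Fin s => (Finset.univ : Finset (Fin n)))
    (fun j i => h j i)
  rw [Fintype.piFinset_univ] at this
  exact this.symm


lemma marginal_one {s n : ℕ} (p : Fin n → ℝ) (hp : ∑ i, p i = 1)
    (j0 : Fin s) (g : Fin n → ℝ) :
    ∑ f : Fin s → Fin n, (∏ j, p (f j)) * g (f j0) = ∑ i, p i * g i := by
  have key : ∀ f : Fin s → Fin n, (∏ j, p (f j)) * g (f j0)
      = ∏ j, (p (f j) * if j = j0 then g (f j) else 1) := by
    intro f
    rw [Finset.prod_mul_distrib, Finset.prod_ite_eq' Finset.univ j0 (fun j => g (f j))]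
    simp
  simp_rw [key]
  rw [sum_pi_prod (fun j i => p i * if j = j0 then g i else 1)]
  rw [Finset.prod_eq_single j0]
  · simp
  · intro b _ hb
    simp only [if_neg hb, mul_one]
    exact hp
  · simp


lemma marginal_two {s n : ℕ} (p : Fin n → ℝ) (hp : ∑ i, p i = 1)
    {j0 j1 : Fin s} (hj : j0 ≠ j1) (g h : Fin n → ℝ) :
    ∑ f : Fin s → Fin n, (∏ j, p (f j)) * (g (f j0) * h (f j1))
      = (∑ i, p i * g i) * (∑ i, p i * h i) := by
  have key : ∀ f : Fin s → Fin n, (∏ j, p (f j)) * (g (f j0) * h (f j1))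
      = ∏ j, (p (f j) * ((if j = j0 then g (f j) else 1) * (if j = j1 then h (f j) else 1))) := by
    intro f
    rw [Finset.prod_mul_distrib, Finset.prod_mul_distrib,
      Finset.prod_ite_eq' Finset.univ j0 (fun j => g (f j)),
      Finset.prod_ite_eq' Finset.univ j1 (fun j => h (f j))]
    simp
  simp_rw [key]
  rw [sum_pi_prod (fun j i => p i * ((if j = j0 then g i else 1) * if j = j1 then h i else 1))]
  have hfac : ∀ j : Fin s, (∑ i, p i * ((if j = j0 then g i else 1) * (if j = j1 then h i else 1)))
      = (if j = j0 then (∑ i, p i * g i) else 1) * (if j = j1 then (∑ i, p i * h i) else 1) := by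
    intro j
    by_cases h0 : j = j0 <;> by_cases h1 : j = j1
    · exact absurd (h0 ▸ h1 ▸ rfl : j0 = j1) hj
    · simp [h0, h1, hj]
    · simp [h0, h1, Ne.symm hj]
    · simp [h0, h1, hp]
  simp_rw [hfac]
  rw [Finset.prod_mul_distrib, Finset.prod_ite_eq' Finset.univ j0, Finset.prod_ite_eq' Finset.univ j1]
  simp


lemma variance_id {s n d : ℕ} (p : Fin n → ℝ) (hp : ∑ i, p i = 1)
    (M : Fin n → Fin d → ℝ) (hM : ∀ t, ∑ i, p i * M i t = 0) :
    ∑ f : Fin s → Fin n, (∏ j, p (f j)) * (∑ t, (∑ j, M (f j) t) ^ 2)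
      = (s : ℝ) * ∑ i, p i * (∑ t, (M i t) ^ 2) := by
  have expand : ∀ f : Fin s → Fin n, (∏ j, p (f j)) * (∑ t, (∑ j, M (f j) t) ^ 2)
      = ∑ t, ∑ j, ∑ k, (∏ l, p (f l)) * (M (f j) t * M (f k) t) := by
    intro f
    rw [Finset.mul_sum]
    refine Finset.sum_congr rfl fun t _ => ?_
    rw [sq, Finset.sum_mul_sum, Finset.mul_sum]
    refine Finset.sum_congr rfl fun j _ => ?_
    rw [Finset.mul_sum]
  simp_rw [expand]
  rw [Finset.sum_comm]
  have inner : ∀ (t : Fin d) (j k : Fin s),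
      (∑ f : Fin s → Fin n, (∏ l, p (f l)) * (M (f j) t * M (f k) t))
        = if j = k then ∑ i, p i * (M i t) ^ 2 else 0 := by
    intro t j k
    by_cases hjk : j = k
    · subst hjk
      rw [if_pos rfl]
      have := marginal_one p hp j (fun i => (M i t) ^ 2)
      simpa [sq] using this
    · rw [if_neg hjk, marginal_two p hp hjk (fun i => M i t) (fun i => M i t), hM t]
      ring
  have swap2 : ∀ t : Fin d,
      (∑ f : Fin s → Fin n, ∑ j, ∑ k, (∏ l, p (f l)) * (M (f j) t * M (f k) t))
        = ∑ j : Fin s, ∑ k : Fin s, ∑ f : Fin s → Fin n, (∏ l, p (f l)) * (M (f j) t * M (f k) t) := by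
    intro t
    rw [Finset.sum_comm]
    refine Finset.sum_congr rfl fun j _ => ?_
    rw [Finset.sum_comm]
  calc ∑ t, ∑ f : Fin s → Fin n, ∑ j, ∑ k, (∏ l, p (f l)) * (M (f j) t * M (f k) t)
      = ∑ t, ∑ j : Fin s, ∑ k : Fin s, ∑ f : Fin s → Fin n,
          (∏ l, p (f l)) * (M (f j) t * M (f k) t) := by
        exact Finset.sum_congr rfl fun t _ => swap2 t
    _ = ∑ t, ∑ j : Fin s, ∑ k : Fin s, (if j = k then ∑ i, p i * (M i t) ^ 2 else 0) := by
        refine Finset.sum_congr rfl fun t _ => Finset.sum_congr rfl fun j _ =>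
          Finset.sum_congr rfl fun k _ => inner t j k
    _ = ∑ t, ∑ j : Fin s, (∑ i, p i * (M i t) ^ 2) := by
        refine Finset.sum_congr rfl fun t _ => Finset.sum_congr rfl fun j _ => ?_
        simp
    _ = (s : ℝ) * ∑ i, p i * (∑ t, (M i t) ^ 2) := by
        simp_rw [Finset.sum_const, card_univ, Fintype.card_fin, nsmul_eq_mul]
        rw [← Finset.mul_sum, Finset.sum_comm]
        congr 1
        refine Finset.sum_congr rfl fun i _ => ?_
        rw [Finset.mul_sum]


lemma zero_of_quad (G K : ℝ) (h : ∀ c : ℝ, 2 * c * G ≤ c ^ 2 * K) : G = 0 := by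
  have hK : 0 ≤ K := by
    have h1 := h 1
    have h2 := h (-1)
    nlinarith
  by_contra hG
  have hG2 : 0 < G ^ 2 := by positivity
  have hK1 : 0 < K + 1 := by linarith
  have key := h (G / (K + 1))
  rw [div_pow] at key
  have key2 : 2 * (G / (K + 1)) * G * ((K+1)^2) ≤ G ^ 2 / (K + 1) ^ 2 * K * ((K+1)^2) := by
    nlinarith [sq_nonneg (K+1)]
  have h3 : G ^ 2 / (K + 1) ^ 2 * K * ((K+1)^2) = G^2 * K := by
    field_simp
  have h4 : 2 * (G / (K + 1)) * G * ((K+1)^2) = 2 * G^2 * (K+1) := by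
    field_simp
  rw [h3, h4] at key2
  nlinarith


lemma exists_max {n d : ℕ} (hd : 0 < d) :
    ∀ (A : Matrix (Fin n) (Fin d) ℝ),
    ∃ v : Fin d → ℝ, (∑ t, (v t) ^ 2) = 1 ∧
      ∀ x : Fin d → ℝ, (∑ t, (x t) ^ 2) = 1 →
        (∑ i, (∑ t, A i t * x t) ^ 2) ≤ ∑ i, (∑ t, A i t * v t) ^ 2 := by
  intro A
  haveI : Nonempty (Fin d) := ⟨⟨0, hd⟩⟩
  set S : Set (EuclideanSpace ℝ (Fin d)) := Metric.sphere 0 1 with hS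
  have hcompact : IsCompact S := isCompact_sphere 0 1
  have hnonempty : S.Nonempty := NormedSpace.sphere_nonempty.mpr zero_le_one
  have hq : Continuous fun x : EuclideanSpace ℝ (Fin d) => ∑ i, (∑ t, A i t * x t) ^ 2 := by
    fun_prop
  obtain ⟨v, hvS, hvmax⟩ := hcompact.exists_isMaxOn hnonempty hq.continuousOn
  have norm_iff : ∀ x : EuclideanSpace ℝ (Fin d), x ∈ S ↔ (∑ t, (x t) ^ 2) = 1 := by
    intro x
    rw [hS, mem_sphere_zero_iff_norm, EuclideanSpace.norm_eq]
    constructor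
    · intro hx
      have : (∑ t, ‖x t‖ ^ 2) = 1 := by
        have h0 : (0:ℝ) ≤ ∑ t, ‖x t‖ ^ 2 := by positivity
        nlinarith [Real.sq_sqrt h0, hx]
      simpa [Real.norm_eq_abs, sq_abs] using this
    · intro hx
      have : (∑ t, ‖x t‖ ^ 2) = 1 := by simpa [Real.norm_eq_abs, sq_abs] using hx
      rw [this, Real.sqrt_one]
  refine ⟨v, (norm_iff v).mp hvS, ?_⟩
  intro x hx
  exact hvmax ((norm_iff (WithLp.toLp 2 x)).mpr hx)


lemma exists_top {n d : ℕ} (hd : 0 < d) (A : Matrix (Fin n) (Fin d) ℝ) :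
    ∃ v : Fin d → ℝ, (∑ t, (v t) ^ 2) = 1 ∧
      (∀ x : Fin d → ℝ,
        (∑ i, (∑ t, A i t * x t) ^ 2) ≤ (∑ i, (∑ t, A i t * v t) ^ 2) * (∑ t, (x t) ^ 2)) ∧
      (∀ t, (∑ i, (∑ r, A i r * v r) * A i t) = (∑ i, (∑ r, A i r * v r) ^ 2) * v t) := by
  obtain ⟨v, hv1, hvmax⟩ := exists_max hd A
  set sig : ℝ := ∑ i, (∑ t, A i t * v t) ^ 2 with hsig
  -- homogeneous maximality
  have hom : ∀ x : Fin d → ℝ,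
      (∑ i, (∑ t, A i t * x t) ^ 2) ≤ sig * (∑ t, (x t) ^ 2) := by
    intro x
    by_cases hx : (∑ t, (x t) ^ 2) = 0
    · have hx0 : ∀ t, x t = 0 := by
        intro t
        have h := (Finset.sum_eq_zero_iff_of_nonneg (fun t _ => sq_nonneg (x t))).mp hx t (mem_univ t)
        nlinarith [sq_nonneg (x t), h]
      have : ∀ i, (∑ t, A i t * x t) = 0 := by
        intro i; exact Finset.sum_eq_zero fun t _ => by rw [hx0 t, mul_zero]
      simp [this, hx]
    · have hxpos : 0 < ∑ t, (x t) ^ 2 := lt_of_le_of_ne (by positivity) (Ne.symm hx)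
      set r : ℝ := Real.sqrt (∑ t, (x t) ^ 2) with hr
      have hrpos : 0 < r := Real.sqrt_pos.mpr hxpos
      have hr2 : r ^ 2 = ∑ t, (x t) ^ 2 := Real.sq_sqrt hxpos.le
      have hunit : (∑ t, (r⁻¹ * x t) ^ 2) = 1 := by
        simp_rw [mul_pow, ← Finset.mul_sum, ← hr2]
        field_simp
      have h := hvmax (fun t => r⁻¹ * x t) hunit
      have hscale : (∑ i, (∑ t, A i t * (r⁻¹ * x t)) ^ 2)
          = r⁻¹ ^ 2 * ∑ i, (∑ t, A i t * x t) ^ 2 := by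
        rw [Finset.mul_sum]
        refine Finset.sum_congr rfl fun i _ => ?_
        rw [← mul_pow]
        congr 1
        rw [Finset.mul_sum]
        exact Finset.sum_congr rfl fun t _ => by ring
      rw [hscale] at h
      have h2 : ∑ i, (∑ t, A i t * x t) ^ 2 ≤ r ^ 2 * sig := by
        have := mul_le_mul_of_nonneg_left h (by positivity : (0:ℝ) ≤ r ^ 2)
        calc ∑ i, (∑ t, A i t * x t) ^ 2
            = r ^ 2 * (r⁻¹ ^ 2 * ∑ i, (∑ t, A i t * x t) ^ 2) := by
              field_simp
          _ ≤ r ^ 2 * sig := this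
      rw [hr2] at h2
      linarith [h2]
  refine ⟨v, hv1, hom, ?_⟩
  -- eigen equation
  -- G u := ⟨Av, Au⟩
  set G : (Fin d → ℝ) → ℝ := fun u => ∑ i, (∑ r, A i r * v r) * (∑ t, A i t * u t) with hG
  have hGv : G v = sig := by
    rw [hG, hsig]
    exact Finset.sum_congr rfl fun i _ => (sq _).symm
  have key : ∀ u : Fin d → ℝ, (∑ t, v t * u t) = 0 → G u = 0 := by
    intro u hu
    set Q : ℝ := ∑ i, (∑ t, A i t * u t) ^ 2 with hQ
    set nu : ℝ := ∑ t, (u t) ^ 2 with hnu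
    apply zero_of_quad (G u) (sig * nu - Q)
    intro c
    have hexp : (∑ i, (∑ t, A i t * (v t + c * u t)) ^ 2) = sig + 2 * c * G u + c ^ 2 * Q := by
      have hsplit : ∀ i, (∑ t, A i t * (v t + c * u t))
          = (∑ t, A i t * v t) + c * (∑ t, A i t * u t) := by
        intro i
        rw [Finset.mul_sum, ← Finset.sum_add_distrib]
        exact Finset.sum_congr rfl fun t _ => by ring
      simp_rw [hsplit]
      rw [hsig, hG, hQ]
      rw [Finset.mul_sum, Finset.mul_sum, ← Finset.sum_add_distrib, ← Finset.sum_add_distrib]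
      refine Finset.sum_congr rfl fun i _ => by ring
    have hnorm : (∑ t, (v t + c * u t) ^ 2) = 1 + c ^ 2 * nu := by
      have : (∑ t, (v t + c * u t) ^ 2)
          = (∑ t, (v t) ^ 2) + 2 * c * (∑ t, v t * u t) + c ^ 2 * (∑ t, (u t) ^ 2) := by
        rw [Finset.mul_sum, Finset.mul_sum, ← Finset.sum_add_distrib, ← Finset.sum_add_distrib]
        refine Finset.sum_congr rfl fun t _ => by ring
      rw [this, hv1, hu, hnu]; ring
    have h := hom (fun t => v t + c * u t)
    rw [hexp, hnorm] at h
    nlinarith [h]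
  -- now conclude the eigen equation
  intro t
  set e : Fin d → ℝ := fun r => if r = t then 1 else 0 with he
  have hdot : (∑ r, v r * e r) = v t := by
    rw [he]; simp
  set c : ℝ := v t with hc
  have hGe : G (fun r => e r - c * v r) = 0 := by
    apply key
    have : (∑ r, v r * (e r - c * v r)) = (∑ r, v r * e r) - c * (∑ r, (v r) ^ 2) := by
      rw [Finset.mul_sum, ← Finset.sum_sub_distrib]
      exact Finset.sum_congr rfl fun r _ => by ring
    rw [this, hdot, hv1, hc]; ring
  have hGlin : G (fun r => e r - c * v r) = G e - c * G v := by
    rw [hG]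
    have : ∀ i, (∑ r, A i r * (e r - c * v r))
        = (∑ r, A i r * e r) - c * (∑ r, A i r * v r) := by
      intro i
      rw [Finset.mul_sum, ← Finset.sum_sub_distrib]
      exact Finset.sum_congr rfl fun r _ => by ring
    simp_rw [this]
    rw [Finset.mul_sum, ← Finset.sum_sub_distrib]
    refine Finset.sum_congr rfl fun i _ => by ring
  have hGe2 : G e = ∑ i, (∑ r, A i r * v r) * A i t := by
    rw [hG]
    refine Finset.sum_congr rfl fun i _ => ?_
    congr 1
    rw [he]; simp
  rw [hGlin, hGe2, hGv] at hGe
  linarith [hGe]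


lemma rank_le_one_of_rows {n d : ℕ} (B : Matrix (Fin n) (Fin d) ℝ) (c : Fin n → ℝ)
    (u : Fin d → ℝ) (h : ∀ i t, B i t = c i * u t) : B.rank ≤ 1 := by
  have hr : LinearMap.range B.mulVecLin ≤ Submodule.span ℝ {c} := by
    rintro y ⟨x, rfl⟩
    have hy : B.mulVecLin x = (∑ t, u t * x t) • c := by
      funext i
      simp only [Matrix.mulVecLin_apply, Matrix.mulVec, dotProduct, Pi.smul_apply,
        smul_eq_mul]
      rw [Finset.sum_mul]
      exact Finset.sum_congr rfl fun t _ => by simp only [h i t]; ring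
    rw [hy]
    exact Submodule.smul_mem _ _ (Submodule.mem_span_singleton_self c)
  have h1 : B.rank ≤ Module.finrank ℝ (Submodule.span ℝ ({c} : Set (Fin n → ℝ))) :=
    Submodule.finrank_mono hr
  by_cases hc : c = 0
  · subst hc
    refine h1.trans ?_
    have : Submodule.span ℝ ({(0 : Fin n → ℝ)} : Set (Fin n → ℝ)) = ⊥ := by simp
    rw [this]
    simp
  · exact h1.trans_eq (finrank_span_singleton hc)


lemma rows_of_rank_le_one {n d : ℕ} (B : Matrix (Fin n) (Fin d) ℝ) (h : B.rank ≤ 1) :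
    ∃ (x : Fin n → ℝ) (y : Fin d → ℝ), ∀ i t, B i t = x i * y t := by
  have hP : (LinearMap.range B.mulVecLin).IsPrincipal :=
    (Submodule.finrank_le_one_iff_isPrincipal _).mp h
  obtain ⟨z, hz⟩ := hP.principal
  have hcol : ∀ t : Fin d, ∃ a : ℝ, ∀ i, B i t = a * z i := by
    intro t
    have hmem : B.mulVec (fun r => if r = t then 1 else 0) ∈ LinearMap.range B.mulVecLin :=
      ⟨_, rfl⟩
    rw [hz, Submodule.mem_span_singleton] at hmem
    obtain ⟨a, ha⟩ := hmem
    refine ⟨a, fun i => ?_⟩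
    have := congrFun ha i
    simp only [Pi.smul_apply, smul_eq_mul] at this
    rw [this]
    simp [Matrix.mulVec, dotProduct]
  choose y hy using hcol
  exact ⟨z, y, fun i t => by rw [hy t i]; ring⟩


lemma sq_sum_zero {d : ℕ} (x : Fin d → ℝ) (h : (∑ t, (x t) ^ 2) = 0) : ∀ t, x t = 0 := by
  intro t
  have := (Finset.sum_eq_zero_iff_of_nonneg (fun t _ => sq_nonneg (x t))).mp h t (mem_univ t)
  nlinarith [sq_nonneg (x t)]

lemma arith_main (sig nwf qW P SD s' u : ℝ) (hsig : 0 < sig) (hs' : 0 < s')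
    (hnw : 0 < nwf) (hqW : 0 ≤ qW) (hP : 0 ≤ P) (hq : sig * u ^ 2 ≤ qW)
    (hPeq : P = nwf - u ^ 2) (hSDdec : SD = P + (u - s' * sig) ^ 2) :
    sig - qW / nwf ≤ 4 / (s' ^ 2 * sig) * SD := by
  have hs2sig : (0:ℝ) < s' ^ 2 * sig := by positivity
  by_cases hu : s' * sig / 2 < u
  · have hupos : 0 < u := by nlinarith [mul_pos hs' hsig]
    have hu2 : s' ^ 2 * sig ^ 2 / 4 < u ^ 2 := by nlinarith [mul_pos hs' hsig]
    have hu2pos : 0 < u ^ 2 := by positivity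
    have hnwu : u ^ 2 ≤ nwf := by linarith
    have c1 : sig * nwf - qW ≤ sig * P := by nlinarith
    have h2 : sig - qW / nwf = (sig * nwf - qW) / nwf := by field_simp
    have h3 : (sig * nwf - qW) / nwf ≤ sig * P / nwf := (div_le_div_iff_of_pos_right hnw).mpr c1
    have h4 : sig * P / nwf ≤ sig * P / u ^ 2 :=
      div_le_div_of_nonneg_left (by positivity) hu2pos hnwu
    have h5 : sig * P / u ^ 2 ≤ sig * P / (s' ^ 2 * sig ^ 2 / 4) :=
      div_le_div_of_nonneg_left (by positivity) (by positivity) hu2.le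
    have h6 : sig * P / (s' ^ 2 * sig ^ 2 / 4) = 4 * P / (s' ^ 2 * sig) := by
      field_simp
    have hPSD : P ≤ SD := by nlinarith [sq_nonneg (u - s' * sig)]
    have h7 : 4 * P / (s' ^ 2 * sig) ≤ 4 * SD / (s' ^ 2 * sig) :=
      (div_le_div_iff_of_pos_right hs2sig).mpr (by linarith)
    have h8 : 4 * SD / (s' ^ 2 * sig) = 4 / (s' ^ 2 * sig) * SD := by ring
    linarith
  · push_neg at hu
    have hdist : s' ^ 2 * sig ^ 2 / 4 ≤ (u - s' * sig) ^ 2 := by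
      nlinarith [mul_pos hs' hsig]
    have hSDlb : s' ^ 2 * sig ^ 2 / 4 ≤ SD := by linarith
    have h1 : 4 / (s' ^ 2 * sig) * (s' ^ 2 * sig ^ 2 / 4) = sig := by
      field_simp
    have h2 : 4 / (s' ^ 2 * sig) * (s' ^ 2 * sig ^ 2 / 4) ≤ 4 / (s' ^ 2 * sig) * SD :=
      mul_le_mul_of_nonneg_left hSDlb (by positivity)
    have hq0 : 0 ≤ qW / nwf := div_nonneg hqW hnw.le
    linarith

end Stmt17Aux

open Stmt17Aux


set_option maxHeartbeats 1000000 in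
/-- Main theorem: there is an absolute constant `C` such that for any nonzero matrix
`A` and `0 < ε < 1`, if `s ≥ C/ε^4` rows are sampled i.i.d. with length-squared
probabilities, then there is a rank-1 matrix `Ã` (a function of the sample) whose
rows lie in the span of the sampled rows, with
`E[‖A − Ã‖_F^2] ≤ (1+ε)·‖A − π_1(A)‖_F^2`. -/
theorem stmt17 :
    ∃ C : ℝ, 0 < C ∧
      ∀ (n d : ℕ) (A : Matrix (Fin n) (Fin d) ℝ), A ≠ 0 →
        ∀ ε : ℝ, 0 < ε → ε < 1 →
          ∀ s : ℕ, C / ε ^ 4 ≤ (s : ℝ) →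
            ∃ Atil : (Fin s → Fin n) → Matrix (Fin n) (Fin d) ℝ,
              (∀ f, (Atil f).rank ≤ 1) ∧
              (∀ f i, (Atil f) i ∈ Submodule.span ℝ (Set.range fun j => A (f j))) ∧
              (∀ B : Matrix (Fin n) (Fin d) ℝ, B.rank ≤ 1 →
                ∑ f : Fin s → Fin n,
                    (∏ j, (∑ t, A (f j) t ^ 2) / (∑ i, ∑ t, A i t ^ 2)) *
                      (∑ i, ∑ t, (A i t - Atil f i t) ^ 2)
                  ≤ (1 + ε) * ∑ i, ∑ t, (A i t - B i t) ^ 2) := by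
  refine ⟨4, by norm_num, ?_⟩
  intro n d A hA ε hε hε1 s hs
  -- A has a nonzero entry
  have hAex : ∃ i t, A i t ≠ 0 := by
    by_contra h
    push_neg at h
    exact hA (by ext i t; exact h i t)
  obtain ⟨i0, t0, hA0⟩ := hAex
  have hd : 0 < d := t0.pos.trans_le (by omega)
  -- Frobenius norm squared
  set F : ℝ := ∑ i, ∑ t, A i t ^ 2 with hFdef
  have hrow_nonneg : ∀ i : Fin n, (0:ℝ) ≤ ∑ t, A i t ^ 2 :=
    fun i => Finset.sum_nonneg fun t _ => sq_nonneg _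
  have hrow0 : (0:ℝ) < ∑ t, A i0 t ^ 2 := by
    apply Finset.sum_pos' (fun t _ => sq_nonneg _) ⟨t0, mem_univ t0, by positivity⟩
  have hF : 0 < F := by
    apply Finset.sum_pos' (fun i _ => hrow_nonneg i) ⟨i0, mem_univ i0, hrow0⟩
  -- sample size facts
  have hsε : (4:ℝ) ≤ (s:ℝ) * ε := by
    have h1 : (4:ℝ) ≤ (s:ℝ) * ε ^ 4 := by
      rw [div_le_iff₀ (by positivity)] at hs
      linarith
    have h2 : ε ^ 4 ≤ ε := by
      have h3 : ε ^ 3 ≤ 1 := pow_le_one₀ hε.le hε1.le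
      calc ε ^ 4 = ε * ε ^ 3 := by ring
        _ ≤ ε * 1 := by nlinarith
        _ = ε := mul_one ε
    nlinarith [Nat.cast_nonneg (α := ℝ) s]
  have hspos : (0:ℝ) < (s:ℝ) := by nlinarith
  -- probabilities
  set p : Fin n → ℝ := fun i => (∑ t, A i t ^ 2) / F with hpdef
  have hp_nonneg : ∀ i, 0 ≤ p i := fun i => div_nonneg (hrow_nonneg i) hF.le
  have hp1 : ∑ i, p i = 1 := by
    rw [hpdef]
    simp only
    rw [← Finset.sum_div, div_self hF.ne']
  -- top direction
  obtain ⟨v, hv1, hom, heig⟩ := exists_top hd A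
  set a : Fin n → ℝ := fun i => ∑ r, A i r * v r with hadef
  set sig : ℝ := ∑ i, (a i) ^ 2 with hsigdef
  have hsig_nonneg : 0 ≤ sig := Finset.sum_nonneg fun i _ => sq_nonneg _
  have hsig_pos : 0 < sig := by
    have h1 := hom (fun t => A i0 t)
    have h2 : ((∑ t, A i0 t ^ 2) ^ 2) ≤ ∑ i, (∑ t, A i t * A i0 t) ^ 2 := by
      have hterm : (∑ t, A i0 t * A i0 t) ^ 2 = (∑ t, A i0 t ^ 2) ^ 2 := by
        congr 1
        exact Finset.sum_congr rfl fun t _ => (sq _).symm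
      calc ((∑ t, A i0 t ^ 2) ^ 2) = (∑ t, A i0 t * A i0 t) ^ 2 := hterm.symm
        _ ≤ ∑ i, (∑ t, A i t * A i0 t) ^ 2 :=
            Finset.single_le_sum (f := fun i => (∑ t, A i t * A i0 t) ^ 2)
              (fun i _ => sq_nonneg _) (mem_univ i0)
    nlinarith [hrow0]
  have hsig_le : sig ≤ F := by
    have : ∀ i : Fin n, (a i) ^ 2 ≤ (∑ t, A i t ^ 2) := by
      intro i
      have cs := Finset.sum_mul_sq_le_sq_mul_sq Finset.univ (fun t => A i t) (fun t => v t)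
      calc (a i) ^ 2 = (∑ t, A i t * v t) ^ 2 := rfl
        _ ≤ (∑ t, A i t ^ 2) * (∑ t, (v t) ^ 2) := by
            simpa [sq] using cs
        _ = ∑ t, A i t ^ 2 := by rw [hv1, mul_one]
    calc sig = ∑ i, (a i) ^ 2 := rfl
      _ ≤ ∑ i, ∑ t, A i t ^ 2 := Finset.sum_le_sum fun i _ => this i
  set rho2 : ℝ := F - sig with hrho2def
  have hrho2_nonneg : 0 ≤ rho2 := by rw [hrho2def]; linarith
  -- the estimator vectors
  set sc : Fin n → ℝ := fun i => if (∑ t, A i t ^ 2) = 0 then 0 else a i * F / (∑ t, A i t ^ 2)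
    with hscdef
  set Z : Fin n → Fin d → ℝ := fun i t => sc i * A i t with hZdef
  set M : Fin n → Fin d → ℝ := fun i t => Z i t - sig * v t with hMdef
  have hZrow : ∀ i, (∑ t, A i t ^ 2) = 0 → ∀ t, A i t = 0 := by
    intro i hi t
    exact sq_sum_zero (fun t => A i t) hi t
  have hpZ_pt : ∀ i t, p i * Z i t = a i * A i t := by
    intro i t
    by_cases hi : (∑ r, A i r ^ 2) = 0
    · have hAi := hZrow i hi
      simp [hZdef, hscdef, hpdef, hi, hAi t]
    · simp only [hZdef, hscdef, hpdef, if_neg hi]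
      field_simp
  have hpZ : ∀ t, (∑ i, p i * Z i t) = sig * v t := by
    intro t
    have h1 : (∑ i, p i * Z i t) = ∑ i, a i * A i t :=
      Finset.sum_congr rfl fun i _ => hpZ_pt i t
    rw [h1]
    exact heig t
  have hM0 : ∀ t, (∑ i, p i * M i t) = 0 := by
    intro t
    have : (∑ i, p i * M i t) = (∑ i, p i * Z i t) - (∑ i, p i * (sig * v t)) := by
      rw [← Finset.sum_sub_distrib]
      exact Finset.sum_congr rfl fun i _ => by rw [hMdef]; ring
    rw [this, hpZ t, ← Finset.sum_mul, hp1]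
    ring
  have hpZ2 : (∑ i, p i * (∑ t, (Z i t) ^ 2)) = F * sig := by
    have hpt : ∀ i, p i * (∑ t, (Z i t) ^ 2) = (a i) ^ 2 * F := by
      intro i
      by_cases hi : (∑ r, A i r ^ 2) = 0
      · have hAi := hZrow i hi
        have ha0 : a i = 0 := by
          rw [hadef]
          exact Finset.sum_eq_zero fun r _ => by rw [hAi r, zero_mul]
        simp [hZdef, hscdef, hi, hAi, ha0]
      · have hZi : (∑ t, (Z i t) ^ 2) = (sc i) ^ 2 * (∑ t, A i t ^ 2) := by
          rw [Finset.mul_sum]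
          exact Finset.sum_congr rfl fun t _ => by rw [hZdef]; ring
        rw [hZi]
        simp only [hscdef, hpdef, if_neg hi]
        field_simp
    rw [Finset.sum_congr rfl fun i _ => hpt i, ← Finset.sum_mul]
    rw [hsigdef]
    ring
  have hpM2 : (∑ i, p i * (∑ t, (M i t) ^ 2)) = sig * rho2 := by
    have step1 : ∀ i, (∑ t, (M i t) ^ 2)
        = (∑ t, (Z i t) ^ 2) - 2 * sig * (∑ t, v t * Z i t) + sig ^ 2 := by
      intro i
      have expand : (∑ t, (M i t) ^ 2)
          = (∑ t, ((Z i t) ^ 2 - 2 * sig * (v t * Z i t) + sig ^ 2 * (v t) ^ 2)) := by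
        refine Finset.sum_congr rfl fun t _ => ?_
        rw [hMdef]; ring
      rw [expand, Finset.sum_add_distrib, Finset.sum_sub_distrib, ← Finset.mul_sum,
        ← Finset.mul_sum, hv1]
      ring
    have step2 : (∑ i, p i * (∑ t, (M i t) ^ 2))
        = (∑ i, p i * (∑ t, (Z i t) ^ 2)) - 2 * sig * (∑ i, p i * (∑ t, v t * Z i t))
          + sig ^ 2 := by
      have : ∀ i, p i * (∑ t, (M i t) ^ 2)
          = p i * (∑ t, (Z i t) ^ 2) - 2 * sig * (p i * (∑ t, v t * Z i t)) + sig ^ 2 * p i := by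
        intro i
        rw [step1 i]; ring
      rw [Finset.sum_congr rfl fun i _ => this i, Finset.sum_add_distrib,
        Finset.sum_sub_distrib, ← Finset.mul_sum, ← Finset.mul_sum, hp1]
      ring
    have step3 : (∑ i, p i * (∑ t, v t * Z i t)) = sig := by
      have h1 : (∑ i, p i * (∑ t, v t * Z i t)) = ∑ i, ∑ t, v t * (p i * Z i t) := by
        refine Finset.sum_congr rfl fun i _ => ?_
        rw [Finset.mul_sum]
        exact Finset.sum_congr rfl fun t _ => by ring
      rw [h1, Finset.sum_comm]
      have h2 : ∀ t : Fin d, (∑ i, v t * (p i * Z i t)) = v t * (sig * v t) := by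
        intro t
        rw [← Finset.mul_sum, hpZ t]
      rw [Finset.sum_congr rfl fun t _ => h2 t]
      have h3 : (∑ t, v t * (sig * v t)) = sig * ∑ t, (v t) ^ 2 := by
        rw [Finset.mul_sum]; exact Finset.sum_congr rfl fun t _ => by ring
      rw [h3, hv1, mul_one]
    rw [step2, step3, hpZ2]
    ring
  -- quad_ge : quadratic form dominates sig * (projection on v)^2
  have quad_ge : ∀ x : Fin d → ℝ,
      sig * (∑ t, v t * x t) ^ 2 ≤ ∑ i, (∑ t, A i t * x t) ^ 2 := by
    intro x
    set c : ℝ := ∑ t, v t * x t with hcdef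
    set x' : Fin d → ℝ := fun t => x t - c * v t with hx'def
    have hvx' : (∑ t, v t * x' t) = 0 := by
      have : (∑ t, v t * x' t) = (∑ t, v t * x t) - c * (∑ t, (v t) ^ 2) := by
        rw [Finset.mul_sum, ← Finset.sum_sub_distrib]
        exact Finset.sum_congr rfl fun t _ => by rw [hx'def]; ring
      rw [this, hv1, ← hcdef]; ring
    have hsplit : ∀ i, (∑ t, A i t * x t) = (∑ t, A i t * x' t) + c * a i := by
      intro i
      have : (∑ t, A i t * x t) = (∑ t, (A i t * x' t + c * (A i t * v t))) := by
        refine Finset.sum_congr rfl fun t _ => ?_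
        rw [hx'def]; ring
      rw [this, Finset.sum_add_distrib, ← Finset.mul_sum, hadef]
    have hcross : (∑ i, a i * (∑ t, A i t * x' t)) = 0 := by
      have h1 : (∑ i, a i * (∑ t, A i t * x' t)) = ∑ i, ∑ t, x' t * (a i * A i t) := by
        refine Finset.sum_congr rfl fun i _ => ?_
        rw [Finset.mul_sum]
        exact Finset.sum_congr rfl fun t _ => by ring
      rw [h1, Finset.sum_comm]
      have h2 : ∀ t : Fin d, (∑ i, x' t * (a i * A i t)) = x' t * (sig * v t) := by
        intro t
        rw [← Finset.mul_sum]
        congr 1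
        exact heig t
      rw [Finset.sum_congr rfl fun t _ => h2 t]
      have h3 : (∑ t, x' t * (sig * v t)) = sig * (∑ t, v t * x' t) := by
        rw [Finset.mul_sum]
        exact Finset.sum_congr rfl fun t _ => by ring
      rw [h3, hvx', mul_zero]
    have hexp : (∑ i, (∑ t, A i t * x t) ^ 2)
        = (∑ i, (∑ t, A i t * x' t) ^ 2) + 2 * c * (∑ i, a i * (∑ t, A i t * x' t))
          + c ^ 2 * sig := by
      have : ∀ i, (∑ t, A i t * x t) ^ 2
          = (∑ t, A i t * x' t) ^ 2 + 2 * c * (a i * (∑ t, A i t * x' t)) + c ^ 2 * (a i) ^ 2 := by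
        intro i
        rw [hsplit i]; ring
      rw [Finset.sum_congr rfl fun i _ => this i, Finset.sum_add_distrib,
        Finset.sum_add_distrib, ← Finset.mul_sum, ← Finset.mul_sum, hsigdef]
    rw [hexp, hcross]
    have : (0:ℝ) ≤ ∑ i, (∑ t, A i t * x' t) ^ 2 := Finset.sum_nonneg fun i _ => sq_nonneg _
    nlinarith
  -- the random vector W and the approximation
  set W : (Fin s → Fin n) → Fin d → ℝ := fun f t => ∑ j, Z (f j) t with hWdef
  set nw : (Fin s → Fin n) → ℝ := fun f => ∑ t, (W f t) ^ 2 with hnwdef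
  set cf : (Fin s → Fin n) → Fin n → ℝ :=
    fun f i => if nw f = 0 then 0 else (∑ r, A i r * W f r) / nw f with hcfdef
  refine ⟨fun f => Matrix.of fun i t => cf f i * W f t, ?_, ?_, ?_⟩
  · -- rank ≤ 1
    intro f
    exact rank_le_one_of_rows _ (cf f) (W f) fun i t => rfl
  · -- rows in span
    intro f i
    have hWspan : W f ∈ Submodule.span ℝ (Set.range fun j => A (f j)) := by
      have hWsum : W f = ∑ j, sc (f j) • A (f j) := by
        funext t
        rw [hWdef]
        simp only [Finset.sum_apply, Pi.smul_apply, smul_eq_mul]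
        rfl
      rw [hWsum]
      exact Submodule.sum_mem _ fun j _ =>
        Submodule.smul_mem _ _ (Submodule.subset_span ⟨j, rfl⟩)
    show (Matrix.of fun i t => cf f i * W f t) i ∈ _
    have hrow : (Matrix.of fun i t => cf f i * W f t) i = cf f i • W f := by
      funext t
      simp [Matrix.of_apply]
    rw [hrow]
    exact Submodule.smul_mem _ _ hWspan
  · -- expectation bound
    intro B hB
    obtain ⟨x, y, hxy⟩ := rows_of_rank_le_one B hB
    -- rho2 is a lower bound for any rank-1 approximation error
    have rho2_le : rho2 ≤ ∑ i, ∑ t, (A i t - B i t) ^ 2 := by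
      by_cases hy : (∑ t, (y t) ^ 2) = 0
      · have hy0 := sq_sum_zero y hy
        have : ∀ i t, (A i t - B i t) ^ 2 = A i t ^ 2 := by
          intro i t; rw [hxy i t, hy0 t]; ring
        have hsum : (∑ i, ∑ t, (A i t - B i t) ^ 2) = F := by
          rw [hFdef]
          exact Finset.sum_congr rfl fun i _ => Finset.sum_congr rfl fun t _ => this i t
        rw [hsum, hrho2def]
        linarith
      · have hny : 0 < ∑ t, (y t) ^ 2 := lt_of_le_of_ne (by positivity) (Ne.symm hy)
        set ny : ℝ := ∑ t, (y t) ^ 2 with hnydef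
        have hrowlb : ∀ i, (∑ t, A i t ^ 2) - (∑ t, A i t * y t) ^ 2 / ny
            ≤ ∑ t, (A i t - B i t) ^ 2 := by
          intro i
          set β : ℝ := ∑ t, A i t * y t with hβdef
          have hexp : (∑ t, (A i t - B i t) ^ 2)
              = (∑ t, A i t ^ 2) - 2 * x i * β + (x i) ^ 2 * ny := by
            have : ∀ t, (A i t - B i t) ^ 2
                = A i t ^ 2 - 2 * x i * (A i t * y t) + (x i) ^ 2 * (y t) ^ 2 := by
              intro t; rw [hxy i t]; ring
            rw [Finset.sum_congr rfl fun t _ => this t, Finset.sum_add_distrib,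
              Finset.sum_sub_distrib, ← Finset.mul_sum, ← Finset.mul_sum, hβdef, hnydef]
          rw [hexp]
          have hkey : β ^ 2 / ny * ny = β ^ 2 := div_mul_cancel₀ _ hny.ne'
          nlinarith [sq_nonneg (β - x i * ny), hny]
        have hsum : (∑ i, ((∑ t, A i t ^ 2) - (∑ t, A i t * y t) ^ 2 / ny))
            = F - (∑ i, (∑ t, A i t * y t) ^ 2) / ny := by
          rw [Finset.sum_sub_distrib, ← Finset.sum_div, hFdef]
        have hqy : (∑ i, (∑ t, A i t * y t) ^ 2) / ny ≤ sig := by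
          rw [div_le_iff₀ hny]
          exact hom y
        have := Finset.sum_le_sum fun i (_ : i ∈ Finset.univ) => hrowlb i
        rw [hsum] at this
        rw [hrho2def]
        linarith
    -- pointwise bound on the loss
    have key : ∀ f : Fin s → Fin n,
        (∑ i, ∑ t, (A i t - cf f i * W f t) ^ 2)
          ≤ rho2 + 4 / ((s:ℝ) ^ 2 * sig) * (∑ t, (∑ j, M (f j) t) ^ 2) := by
      intro f
      have hWft : ∀ t, W f t = ∑ j, Z (f j) t := fun t => rfl
      have hnwf : nw f = ∑ t, (W f t) ^ 2 := rfl
      have hD : ∀ t, (∑ j, M (f j) t) = W f t - (s:ℝ) * sig * v t := by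
        intro t
        have h1 : ∀ j : Fin s, M (f j) t = Z (f j) t - sig * v t := fun j => rfl
        rw [Finset.sum_congr rfl fun j _ => h1 j, Finset.sum_sub_distrib, Finset.sum_const,
          card_univ, Fintype.card_fin, nsmul_eq_mul, ← hWft t]
        ring
      set u : ℝ := ∑ t, v t * W f t with hudef
      set P : ℝ := ∑ t, (W f t - u * v t) ^ 2 with hPdef
      set SD : ℝ := ∑ t, (∑ j, M (f j) t) ^ 2 with hSDdef
      have hP_nonneg : 0 ≤ P := Finset.sum_nonneg fun t _ => sq_nonneg _
      have hSD_eq : SD = nw f - 2 * ((s:ℝ) * sig) * u + (s:ℝ) ^ 2 * sig ^ 2 := by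
        have h1 : ∀ t, (∑ j, M (f j) t) ^ 2
            = (W f t) ^ 2 - 2 * ((s:ℝ) * sig) * (v t * W f t)
              + (s:ℝ) ^ 2 * sig ^ 2 * (v t) ^ 2 := by
          intro t
          rw [hD t]; ring
        rw [hSDdef, Finset.sum_congr rfl fun t _ => h1 t, Finset.sum_add_distrib,
          Finset.sum_sub_distrib, ← Finset.mul_sum, ← Finset.mul_sum, ← hudef, hv1, ← hnwf]
        ring
      have hP_eq : P = nw f - u ^ 2 := by
        have h1 : ∀ t, (W f t - u * v t) ^ 2
            = (W f t) ^ 2 - 2 * u * (v t * W f t) + u ^ 2 * (v t) ^ 2 := by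
          intro t; ring
        rw [hPdef, Finset.sum_congr rfl fun t _ => h1 t, Finset.sum_add_distrib,
          Finset.sum_sub_distrib, ← Finset.mul_sum, ← Finset.mul_sum, ← hudef, hv1, ← hnwf]
        ring
      have hSD_decomp : SD = P + (u - (s:ℝ) * sig) ^ 2 := by
        rw [hSD_eq, hP_eq]; ring
      by_cases hnw0 : nw f = 0
      · -- degenerate case : W f = 0
        have hW0 : ∀ t, W f t = 0 := by
          intro t
          exact sq_sum_zero (W f) (by rw [← hnwf]; exact hnw0) t
        have hloss : (∑ i, ∑ t, (A i t - cf f i * W f t) ^ 2) = F := by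
          rw [hFdef]
          refine Finset.sum_congr rfl fun i _ => Finset.sum_congr rfl fun t _ => ?_
          rw [hW0 t, mul_zero, sub_zero]
        have hu0 : u = 0 := by
          rw [hudef]
          exact Finset.sum_eq_zero fun t _ => by rw [hW0 t, mul_zero]
        have hSDval : SD = (s:ℝ) ^ 2 * sig ^ 2 := by
          rw [hSD_eq, hu0, hnw0]; ring
        have hc : 4 / ((s:ℝ) ^ 2 * sig) * ((s:ℝ) ^ 2 * sig ^ 2) = 4 * sig := by
          field_simp
        rw [hloss, hSDval, hc, hrho2def]
        linarith
      · have hnwpos : 0 < nw f := lt_of_le_of_ne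
          (by rw [hnwf]; exact Finset.sum_nonneg fun t _ => sq_nonneg _) (Ne.symm hnw0)
        set qW : ℝ := ∑ i, (∑ t, A i t * W f t) ^ 2 with hqWdef
        have hqW_nonneg : 0 ≤ qW := Finset.sum_nonneg fun i _ => sq_nonneg _
        have hcfi : ∀ i, cf f i = (∑ r, A i r * W f r) / nw f := by
          intro i
          show (if nw f = 0 then 0 else (∑ r, A i r * W f r) / nw f) = _
          rw [if_neg hnw0]
        have hloss : (∑ i, ∑ t, (A i t - cf f i * W f t) ^ 2) = F - qW / nw f := by
          have hrow : ∀ i, (∑ t, (A i t - cf f i * W f t) ^ 2)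
              = (∑ t, A i t ^ 2) - (∑ t, A i t * W f t) ^ 2 / nw f := by
            intro i
            have hexp2 : (∑ t, (A i t - cf f i * W f t) ^ 2)
                = (∑ t, A i t ^ 2) - 2 * cf f i * (∑ t, A i t * W f t)
                  + (cf f i) ^ 2 * nw f := by
              have h1 : ∀ t, (A i t - cf f i * W f t) ^ 2
                  = A i t ^ 2 - 2 * cf f i * (A i t * W f t) + (cf f i) ^ 2 * (W f t) ^ 2 := by
                intro t; ring
              rw [Finset.sum_congr rfl fun t _ => h1 t, Finset.sum_add_distrib,
                Finset.sum_sub_distrib, ← Finset.mul_sum, ← Finset.mul_sum, ← hnwf]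
            rw [hexp2, hcfi i]
            field_simp
            ring
          rw [Finset.sum_congr rfl fun i _ => hrow i, Finset.sum_sub_distrib,
            ← Finset.sum_div, ← hqWdef, hFdef]
        have hq : sig * u ^ 2 ≤ qW := by
          have := quad_ge (W f)
          rw [← hudef, ← hqWdef] at this
          exact this
        rw [hloss]
        have harith := arith_main sig (nw f) qW P SD (s:ℝ) u hsig_pos hspos hnwpos
          hqW_nonneg hP_nonneg hq hP_eq hSD_decomp
        rw [hrho2def]
        linarith
    -- assemble the expectation bound
    have hPf_nonneg : ∀ f : Fin s → Fin n, 0 ≤ ∏ j, p (f j) :=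
      fun f => Finset.prod_nonneg fun j _ => hp_nonneg _
    have hsum1 : (∑ f : Fin s → Fin n, ∏ j, p (f j)) = 1 := by
      rw [sum_pi_prod (fun _ i => p i)]
      simp [hp1]
    have hvar := variance_id (s := s) p hp1 M hM0
    rw [hpM2] at hvar
    show (∑ f : Fin s → Fin n,
        (∏ j, (∑ t, A (f j) t ^ 2) / F) * (∑ i, ∑ t, (A i t - cf f i * W f t) ^ 2))
          ≤ (1 + ε) * ∑ i, ∑ t, (A i t - B i t) ^ 2
    have hmain : ∀ f : Fin s → Fin n,
        (∏ j, (∑ t, A (f j) t ^ 2) / F) * (∑ i, ∑ t, (A i t - cf f i * W f t) ^ 2)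
          ≤ (∏ j, p (f j)) * (rho2 + 4 / ((s:ℝ) ^ 2 * sig) * (∑ t, (∑ j, M (f j) t) ^ 2)) := by
      intro f
      have hpp : (∏ j, (∑ t, A (f j) t ^ 2) / F) = ∏ j, p (f j) := rfl
      rw [hpp]
      exact mul_le_mul_of_nonneg_left (key f) (hPf_nonneg f)
    have hstep1 : (∑ f : Fin s → Fin n,
        (∏ j, (∑ t, A (f j) t ^ 2) / F) * (∑ i, ∑ t, (A i t - cf f i * W f t) ^ 2))
          ≤ ∑ f : Fin s → Fin n,
            (∏ j, p (f j)) * (rho2 + 4 / ((s:ℝ) ^ 2 * sig) * (∑ t, (∑ j, M (f j) t) ^ 2)) :=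
      Finset.sum_le_sum fun f _ => hmain f
    have hstep2 : (∑ f : Fin s → Fin n,
        (∏ j, p (f j)) * (rho2 + 4 / ((s:ℝ) ^ 2 * sig) * (∑ t, (∑ j, M (f j) t) ^ 2)))
          = rho2 * (∑ f : Fin s → Fin n, ∏ j, p (f j))
            + 4 / ((s:ℝ) ^ 2 * sig) * (∑ f : Fin s → Fin n,
                (∏ j, p (f j)) * (∑ t, (∑ j, M (f j) t) ^ 2)) := by
      have hterm : ∀ f : Fin s → Fin n,
          (∏ j, p (f j)) * (rho2 + 4 / ((s:ℝ) ^ 2 * sig) * (∑ t, (∑ j, M (f j) t) ^ 2))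
            = rho2 * (∏ j, p (f j))
              + 4 / ((s:ℝ) ^ 2 * sig) * ((∏ j, p (f j)) * (∑ t, (∑ j, M (f j) t) ^ 2)) :=
        fun f => by ring
      rw [Finset.sum_congr rfl fun f _ => hterm f, Finset.sum_add_distrib,
        ← Finset.mul_sum, ← Finset.mul_sum]
    have hstep3 : 4 / ((s:ℝ) ^ 2 * sig) * ((s:ℝ) * (sig * rho2)) = 4 * rho2 / (s:ℝ) := by
      field_simp
    have hstep4 : 4 * rho2 / (s:ℝ) ≤ ε * rho2 := by
      rw [div_le_iff₀ hspos]
      nlinarith [hrho2_nonneg, hsε]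
    have hfin : rho2 + ε * rho2 ≤ (1 + ε) * ∑ i, ∑ t, (A i t - B i t) ^ 2 := by
      have h1 : rho2 + ε * rho2 = (1 + ε) * rho2 := by ring
      rw [h1]
      exact mul_le_mul_of_nonneg_left rho2_le (by linarith)
    calc (∑ f : Fin s → Fin n,
        (∏ j, (∑ t, A (f j) t ^ 2) / F) * (∑ i, ∑ t, (A i t - cf f i * W f t) ^ 2))
        ≤ ∑ f : Fin s → Fin n,
            (∏ j, p (f j)) * (rho2 + 4 / ((s:ℝ) ^ 2 * sig) * (∑ t, (∑ j, M (f j) t) ^ 2)) :=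
          hstep1
      _ = rho2 * (∑ f : Fin s → Fin n, ∏ j, p (f j))
            + 4 / ((s:ℝ) ^ 2 * sig) * (∑ f : Fin s → Fin n,
                (∏ j, p (f j)) * (∑ t, (∑ j, M (f j) t) ^ 2)) := hstep2
      _ = rho2 + 4 / ((s:ℝ) ^ 2 * sig) * ((s:ℝ) * (sig * rho2)) := by
          rw [hsum1, hvar]; ring
      _ = rho2 + 4 * rho2 / (s:ℝ) := by rw [hstep3]
      _ ≤ rho2 + ε * rho2 := by linarith
      _ ≤ (1 + ε) * ∑ i, ∑ t, (A i t - B i t) ^ 2 := hfin
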